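/- Let Y be a Tychonoff space, X ⊆ Y a closed subspace, dY a compactification of Y, and cX a compactification of X which is smaller than the closure of X in dY (i.e., there is a continuous map from the closure of X in dY onto cX restricting to the identity on X). Then there exists a compactification cY of Y such that the closure of X in cY is equivalent to cX. -/

import Mathlib

universe u

open Topology Filter Set

structure Compactification (X : Type u) [TopologicalSpace X] : Type (u + 1) where
  space : Type u
  [ts : TopologicalSpace space]
  [compact : CompactSpace space]
  [t2 : T2Space space]
  emb : X → space
  isEmbedding : IsEmbedding emb
  dense : DenseRange emb

attribute [instance] Compactification.ts Compactification.compact Compactification.t2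

section Aux

variable {Y : Type u} [TopologicalSpace Y] {X : Set Y}
  {dY : Compactification Y} {cX : Compactification X}
  {g : ↥(closure (dY.emb '' X)) → cX.space}

/-- membership lemma -/
theorem ext_mem (hX : IsClosed X) {y : Y} (h : dY.emb y ∈ closure (dY.emb '' X)) : y ∈ X := by
  have := dY.isEmbedding.closure_eq_preimage_closure_image X
  have : y ∈ closure X := by rw [this]; exact h
  rwa [hX.closure_eq] at this

/-- key lemma -/
theorem ext_key (hg : Continuous g)
    (hgx : ∀ (x : Y) (hx : x ∈ X),
      g ⟨dY.emb x, subset_closure (Set.mem_image_of_mem _ hx)⟩ = cX.emb ⟨x, hx⟩)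
    (z : ↥(closure (dY.emb '' X))) (y : ↥X) (h : g z = cX.emb y) :
    (z : dY.space) = dY.emb ↑y := by
  set f : ↥X → dY.space := fun x => dY.emb ↑x with hf
  set F : Filter ↥X := comap f (𝓝 (z : dY.space)) with hF
  have hne : F.NeBot := by
    rw [hF, comap_neBot_iff]
    intro t ht
    have := z.2
    rw [mem_closure_iff_nhds] at this
    obtain ⟨a, hat, x, hx, hxa⟩ := this t ht
    exact ⟨⟨x, hx⟩, by simpa [hf, hxa] using hat⟩
  have h1 : Tendsto f F (𝓝 (z : dY.space)) := tendsto_comap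
  set fK : ↥X → ↥(closure (dY.emb '' X)) :=
    fun x => ⟨f x, subset_closure (Set.mem_image_of_mem _ x.2)⟩ with hfK
  have h1' : Tendsto fK F (𝓝 z) := by
    rw [IsInducing.subtypeVal.tendsto_nhds_iff]
    exact h1
  have h2 : Tendsto (g ∘ fK) F (𝓝 (g z)) := (hg.tendsto z).comp h1'
  have h2' : Tendsto cX.emb F (𝓝 (cX.emb y)) := by
    rw [← h]
    exact h2.congr fun x => hgx x.1 x.2
  have h3 : Tendsto id F (𝓝 y) := by
    rw [cX.isEmbedding.tendsto_nhds_iff]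
    exact h2'
  have h4 : Tendsto f F (𝓝 (f y)) :=
    ((dY.isEmbedding.continuous.comp continuous_subtype_val).tendsto y).comp h3
  exact tendsto_nhds_unique h1 h4


variable (X dY cX g) in
/-- The gluing setoid on `dY.space`. -/
def extSetoid : Setoid dY.space where
  r a b := a = b ∨ ∃ (ha : a ∈ closure (dY.emb '' X)) (hb : b ∈ closure (dY.emb '' X)),
      g ⟨a, ha⟩ = g ⟨b, hb⟩
  iseqv := by
    refine ⟨fun a => Or.inl rfl, ?_, ?_⟩
    · rintro a b (rfl | ⟨ha, hb, h⟩)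
      · exact Or.inl rfl
      · exact Or.inr ⟨hb, ha, h.symm⟩
    · rintro a b c (rfl | ⟨ha, hb, h1⟩) h2
      · exact h2
      · rcases h2 with rfl | ⟨hb', hc, h2⟩
        · exact Or.inr ⟨ha, hb, h1⟩
        · exact Or.inr ⟨ha, hc, h1.trans h2⟩

theorem ext_sat (hg : Continuous g) {C : Set dY.space} (hC : IsClosed C) :
    IsClosed ((Quotient.mk (extSetoid X dY cX g)) ⁻¹'
      ((Quotient.mk (extSetoid X dY cX g)) '' C)) := by
  haveI : CompactSpace ↥(closure (dY.emb '' X)) :=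
    isCompact_iff_compactSpace.mp (isClosed_closure.isCompact)
  have hval : Continuous ((↑) : ↥(closure (dY.emb '' X)) → dY.space) := continuous_subtype_val
  have heq : (Quotient.mk (extSetoid X dY cX g)) ⁻¹' ((Quotient.mk (extSetoid X dY cX g)) '' C)
      = C ∪ (Subtype.val '' (g ⁻¹' (g '' (Subtype.val ⁻¹' C)))) := by
    ext a
    constructor
    · rintro ⟨c, hc, hqc⟩
      rcases Quotient.exact hqc with h | ⟨hc', ha', hgg⟩
      · exact Or.inl (h ▸ hc)
      · exact Or.inr ⟨⟨a, ha'⟩, ⟨⟨c, hc'⟩, hc, hgg⟩, rfl⟩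
    · rintro (ha | ⟨a', ⟨c', hc', hgg⟩, rfl⟩)
      · exact ⟨a, ha, rfl⟩
      · exact ⟨c'.1, hc', Quotient.sound (Or.inr ⟨c'.2, a'.2, hgg⟩)⟩
  rw [heq]
  refine hC.union ?_
  have h1 : IsCompact (Subtype.val ⁻¹' C : Set ↥(closure (dY.emb '' X))) :=
    (hC.preimage hval).isCompact
  have h2 : IsClosed (g '' (Subtype.val ⁻¹' C)) := (h1.image hg).isClosed
  have h3 : IsCompact (g ⁻¹' (g '' (Subtype.val ⁻¹' C))) := (h2.preimage hg).isCompact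
  exact (h3.image hval).isClosed

theorem ext_isClosedMap (hg : Continuous g) :
    IsClosedMap (Quotient.mk (extSetoid X dY cX g)) := fun C hC => by
  rw [← (isQuotientMap_quotient_mk' (s := extSetoid X dY cX g)).isClosed_preimage]
  exact ext_sat hg hC

theorem ext_t2 (hg : Continuous g) : T2Space (Quotient (extSetoid X dY cX g)) := by
  haveI : CompactSpace ↥(closure (dY.emb '' X)) :=
    isCompact_iff_compactSpace.mp (isClosed_closure.isCompact)
  set q := Quotient.mk (extSetoid X dY cX g) with hq
  have hqc : Continuous q := continuous_quot_mk
  constructor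
  intro w₁ w₂ hne
  obtain ⟨a, rfl⟩ := Quotient.exists_rep w₁
  obtain ⟨b, rfl⟩ := Quotient.exists_rep w₂
  have hfiber : ∀ c : dY.space, IsClosed (q ⁻¹' {q c}) := by
    intro c
    have : q ⁻¹' {q c} = q ⁻¹' (q '' {c}) := by rw [Set.image_singleton]
    rw [this]
    exact ext_sat hg isClosed_singleton
  have hdis : Disjoint (q ⁻¹' {q a}) (q ⁻¹' {q b}) := by
    rw [Set.disjoint_left]
    rintro c (hc1 : q c = q a) (hc2 : q c = q b)
    exact hne (hc1.symm.trans hc2)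
  obtain ⟨U, V, hU, hV, hAU, hBV, hUV⟩ :=
    normal_separation (hfiber a) (hfiber b) hdis
  set U' := (q ⁻¹' (q '' Uᶜ))ᶜ with hU'
  set V' := (q ⁻¹' (q '' Vᶜ))ᶜ with hV'
  have hU'open : IsOpen U' := (ext_sat hg hU.isClosed_compl).isOpen_compl
  have hV'open : IsOpen V' := (ext_sat hg hV.isClosed_compl).isOpen_compl
  have hU'sub : U' ⊆ U := fun c hc => by
    by_contra h
    exact hc ⟨c, h, rfl⟩
  have hV'sub : V' ⊆ V := fun c hc => by
    by_contra h
    exact hc ⟨c, h, rfl⟩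
  refine ⟨q '' U', q '' V', ?_, ?_, ⟨a, ?_, rfl⟩, ⟨b, ?_, rfl⟩, ?_⟩
  · have heq2 : q ⁻¹' (q '' U') = U' := by
      ext c
      constructor
      · rintro ⟨u, hu, huc⟩
        intro hbad
        rcases hbad with ⟨v, hv, hvc⟩
        exact hu ⟨v, hv, hvc.trans huc.symm⟩
      · exact fun hc => ⟨c, hc, rfl⟩
    exact isQuotientMap_quot_mk.isOpen_preimage.mp (by show IsOpen (q ⁻¹' (q '' U')); rw [heq2]; exact hU'open)
  · have heq2 : q ⁻¹' (q '' V') = V' := by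
      ext c
      constructor
      · rintro ⟨u, hu, huc⟩
        intro hbad
        rcases hbad with ⟨v, hv, hvc⟩
        exact hu ⟨v, hv, hvc.trans huc.symm⟩
      · exact fun hc => ⟨c, hc, rfl⟩
    exact isQuotientMap_quot_mk.isOpen_preimage.mp (by show IsOpen (q ⁻¹' (q '' V')); rw [heq2]; exact hV'open)
  · intro hbad
    rcases hbad with ⟨v, hv, hvc⟩
    exact hv (hAU (show q v = q a from hvc))
  · intro hbad
    rcases hbad with ⟨v, hv, hvc⟩
    exact hv (hBV (show q v = q b from hvc))
  · rw [Set.disjoint_left]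
    rintro w ⟨u, hu, rfl⟩ ⟨v, hv, hvw⟩
    have hvU : v ∈ U' := by
      intro hbad
      rcases hbad with ⟨u', hu', hu'v⟩
      exact hu ⟨u', hu', hu'v.trans hvw⟩
    exact Set.disjoint_left.mp hUV (hU'sub hvU) (hV'sub hv)

end Aux
theorem extend_compactification {Y : Type u} [TopologicalSpace Y] [T35Space Y]
    (X : Set Y) (hX : IsClosed X) (dY : Compactification Y) (cX : Compactification X)
    (hsmall : ∃ g : ↥(closure (dY.emb '' X)) → cX.space, Continuous g ∧
      ∀ (x : Y) (hx : x ∈ X),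
        g ⟨dY.emb x, subset_closure (Set.mem_image_of_mem _ hx)⟩ = cX.emb ⟨x, hx⟩) :
    ∃ cY : Compactification Y,
      (∃ g : ↥(closure (cY.emb '' X)) → cX.space, Continuous g ∧
        ∀ (x : Y) (hx : x ∈ X),
          g ⟨cY.emb x, subset_closure (Set.mem_image_of_mem _ hx)⟩ = cX.emb ⟨x, hx⟩) ∧
      (∃ g' : cX.space → ↥(closure (cY.emb '' X)), Continuous g' ∧
        ∀ (x : Y) (hx : x ∈ X),
          g' (cX.emb ⟨x, hx⟩) = ⟨cY.emb x, subset_closure (Set.mem_image_of_mem _ hx)⟩) := by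
  classical
  obtain ⟨g, hg, hgx⟩ := hsmall
  haveI hT2 : T2Space (Quotient (extSetoid X dY cX g)) := ext_t2 hg
  haveI hKcomp : CompactSpace ↥(closure (dY.emb '' X)) :=
    isCompact_iff_compactSpace.mp (isClosed_closure.isCompact)
  set q : dY.space → Quotient (extSetoid X dY cX g) := Quotient.mk (extSetoid X dY cX g)
    with hqdef
  have hqc : Continuous q := continuous_quot_mk
  have hqclosed : IsClosedMap q := ext_isClosedMap hg
  have hqsurj : Function.Surjective q := fun w => Quotient.exists_rep w
  set e : Y → Quotient (extSetoid X dY cX g) := fun y => q (dY.emb y) with hedef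
  have hec : Continuous e := hqc.comp dY.isEmbedding.continuous
  -- collapsing only happens inside the fibers of `g`, and those fibers meeting
  -- the image of `Y` are singletons:
  have hqe : ∀ (y : Y) (d : dY.space), q (dY.emb y) = q d → dY.emb y = d := by
    intro y d h
    rcases Quotient.exact h with h' | ⟨ha, hb, hgg⟩
    · exact h'
    · have hyX : y ∈ X := ext_mem hX ha
      have h2 : g ⟨d, hb⟩ = cX.emb ⟨y, hyX⟩ := hgg.symm.trans (hgx y hyX)
      exact (ext_key hg hgx ⟨d, hb⟩ ⟨y, hyX⟩ h2).symm
  -- `e` is an embedding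
  have hinj : Function.Injective e := fun y₁ y₂ h =>
    dY.isEmbedding.injective (hqe y₁ (dY.emb y₂) h)
  have hind : IsInducing e := by
    refine ⟨le_antisymm (continuous_iff_le_induced.mp hec) ?_⟩
    intro U hU
    rw [isOpen_induced_iff]
    refine ⟨(q '' closure (dY.emb '' Uᶜ))ᶜ, (hqclosed _ isClosed_closure).isOpen_compl, ?_⟩
    ext y
    simp only [Set.mem_preimage, Set.mem_compl_iff]
    constructor
    · intro h
      by_contra hyU
      exact h ⟨dY.emb y, subset_closure (Set.mem_image_of_mem _ hyU), rfl⟩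
    · intro hyU
      rintro ⟨d, hd, hqd⟩
      have : dY.emb y = d := hqe y d hqd.symm
      rw [← this] at hd
      have : y ∈ closure (Uᶜ : Set Y) := by
        rw [dY.isEmbedding.closure_eq_preimage_closure_image (Uᶜ : Set Y)]
        exact hd
      rw [(hU.isClosed_compl).closure_eq] at this
      exact this hyU
  have hdense : DenseRange e := DenseRange.comp hqsurj.denseRange dY.dense hqc
  set cY : Compactification Y :=
    { space := Quotient (extSetoid X dY cX g)
      emb := e
      isEmbedding := ⟨hind, hinj⟩
      dense := hdense } with hcY
  have hKq : closure (e '' X) = q '' closure (dY.emb '' X) := by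
    apply Set.Subset.antisymm
    · apply closure_minimal ?_ (hqclosed _ isClosed_closure)
      rintro w ⟨x, hx, rfl⟩
      exact ⟨dY.emb x, subset_closure (Set.mem_image_of_mem _ hx), rfl⟩
    · have h1 : q '' (dY.emb '' X) = e '' X := by
        rw [← Set.image_comp]
        rfl
      calc q '' closure (dY.emb '' X) ⊆ closure (q '' (dY.emb '' X)) :=
            image_closure_subset_closure_image hqc
        _ = closure (e '' X) := by rw [h1]
  haveI : CompactSpace ↥(closure (e '' X)) :=
    isCompact_iff_compactSpace.mp (isClosed_closure.isCompact)
  set m : ↥(closure (dY.emb '' X)) → ↥(closure (e '' X)) :=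
    fun z => ⟨q z.1, by rw [hKq]; exact Set.mem_image_of_mem q z.2⟩ with hmdef
  have hmc : Continuous m := Continuous.subtype_mk (hqc.comp continuous_subtype_val) _
  have hmsurj : Function.Surjective m := by
    rintro ⟨w, hw⟩
    rw [hKq] at hw
    obtain ⟨z, hz, rfl⟩ := hw
    exact ⟨⟨z, hz⟩, rfl⟩
  have hfib : ∀ z₁ z₂, m z₁ = m z₂ → g z₁ = g z₂ := by
    intro z₁ z₂ h
    have hq12 : q z₁.1 = q z₂.1 := congrArg Subtype.val h
    rcases Quotient.exact hq12 with h' | ⟨ha, hb, hgg⟩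
    · rw [Subtype.ext h']
    · exact hgg
  have hfib' : ∀ z₁ z₂, g z₁ = g z₂ → m z₁ = m z₂ := fun z₁ z₂ h =>
    Subtype.ext (Quotient.sound (Or.inr ⟨z₁.2, z₂.2, h⟩))
  set G : ↥(closure (e '' X)) → cX.space := fun w => g (Function.surjInv hmsurj w) with hGdef
  have hgm : ∀ z, G (m z) = g z := fun z =>
    hfib _ _ (Function.surjInv_eq hmsurj (m z))
  have hGc : Continuous G := by
    have hquot : IsQuotientMap m := (hmc.isClosedMap).isQuotientMap hmc hmsurj
    rw [hquot.continuous_iff]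
    have hGm : G ∘ m = g := funext hgm
    rw [hGm]
    exact hg
  have hform : ∀ (x : Y) (hx : x ∈ X),
      G ⟨e x, subset_closure (Set.mem_image_of_mem _ hx)⟩ = cX.emb ⟨x, hx⟩ := by
    intro x hx
    have h1 : (⟨e x, subset_closure (Set.mem_image_of_mem _ hx)⟩ : ↥(closure (e '' X)))
        = m ⟨dY.emb x, subset_closure (Set.mem_image_of_mem _ hx)⟩ := Subtype.ext rfl
    rw [h1, hgm]
    exact hgx x hx
  have hgsurj : Function.Surjective g := by
    have hcl : IsClosed (Set.range g) := (isCompact_range hg).isClosed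
    have hsub : closure (Set.range cX.emb) ⊆ Set.range g := by
      apply closure_minimal ?_ hcl
      rintro p ⟨x, rfl⟩
      exact ⟨⟨dY.emb x.1, subset_closure (Set.mem_image_of_mem _ x.2)⟩, hgx x.1 x.2⟩
    intro p
    exact hsub (by rw [cX.dense.closure_eq]; trivial)
  have hGbij : Function.Bijective G := by
    constructor
    · intro w₁ w₂ h
      obtain ⟨z₁, rfl⟩ := hmsurj w₁
      obtain ⟨z₂, rfl⟩ := hmsurj w₂
      rw [hgm, hgm] at h
      exact hfib' z₁ z₂ h
    · intro p
      obtain ⟨z, hz⟩ := hgsurj p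
      exact ⟨m z, by rw [hgm]; exact hz⟩
  set homeo : ↥(closure (e '' X)) ≃ₜ cX.space :=
    Continuous.homeoOfEquivCompactToT2 (f := Equiv.ofBijective G hGbij) hGc with hhdef
  refine ⟨cY, ⟨G, hGc, hform⟩, ⟨homeo.symm, homeo.symm.continuous, ?_⟩⟩
  intro x hx
  refine homeo.toEquiv.symm_apply_eq.mpr ?_
  exact (hform x hx).symm
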